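/- Let L be a positive integer and x : Fin L → {0,1} such that the support of x is a union of p circularly-consecutive segments. With α̃ the pseudo-periodic assignment of total weight N, max_s Σ_i x(i)·α̃^{↺s}(i) ≤ (N/L)·Σ_i x(i) + p. -/

import Mathlib

open Finset

open Classical in
noncomputable def bb (L r : ℕ) (i : ℕ) : ℝ :=
  if ∃ k < r, i = Nat.floor ((L : ℝ) / (r : ℕ) * k) then 1 else 0

lemma floor_eq (L r k : ℕ) : Nat.floor ((L:ℝ)/(r:ℕ) * k) = k * L / r := by
  have : (L:ℝ)/(r:ℕ) * k = ((k*L : ℕ) : ℝ) / (r : ℕ) := by push_cast; ring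
  rw [this, Nat.floor_div_natCast, Nat.floor_natCast]

lemma div_strictmono {L r : ℕ} (hr : 0 < r) (hrL : r ≤ L) {k₁ k₂ : ℕ} (h : k₁ < k₂) :
    k₁ * L / r < k₂ * L / r := by
  have h1 : k₁ * L + r ≤ k₂ * L := by
    have : (k₁ + 1) * L ≤ k₂ * L := Nat.mul_le_mul_right _ h
    nlinarith
  calc k₁ * L / r < k₁ * L / r + 1 := Nat.lt_succ_self _
    _ = (k₁ * L + r) / r := (Nat.add_div_right _ hr).symm
    _ ≤ k₂ * L / r := Nat.div_le_div_right h1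

lemma div_lt_L {L r k : ℕ} (hL : 0 < L) (hr : 0 < r) (hk : k < r) : k * L / r < L := by
  rw [Nat.div_lt_iff_lt_mul hr]
  nlinarith

lemma div_add_L {L r k : ℕ} (hr : 0 < r) : (k + r) * L / r = k * L / r + L := by
  have : (k + r) * L = k * L + L * r := by ring
  rw [this, Nat.add_mul_div_right _ _ hr]

open Classical in
lemma arc_bound (L r : ℕ) (hL : 0 < L) (hr : r < L) (c ℓ : ℕ) (hc : c < L) (hℓ : ℓ ≤ L) :
    ∑ t ∈ range ℓ, bb L r ((c+t)%L) ≤ (ℓ * r : ℝ) / L + 1 := by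
  rcases Nat.eq_zero_or_pos r with hr0 | hr0
  · subst hr0
    have : ∀ t, bb L 0 ((c+t)%L) = 0 := by intro t; simp [bb]
    simp only [this, Finset.sum_const, smul_zero]
    positivity
  have hsum : ∑ t ∈ range ℓ, bb L r ((c+t)%L)
      = ((range ℓ).filter (fun t => ∃ k < r, (c+t)%L = Nat.floor ((L : ℝ) / (r : ℕ) * k))).card := by
    rw [← Finset.sum_boole]; rfl
  rw [hsum]
  set K := (range (2*r)).filter (fun k => c ≤ k*L/r ∧ k*L/r < c+ℓ) with hK
  have hmemK : ∀ k, k ∈ K ↔ k < 2*r ∧ c ≤ k*L/r ∧ k*L/r < c+ℓ := by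
    intro k; simp [hK, Finset.mem_filter, Finset.mem_range, and_assoc]
  have hcard : ((range ℓ).filter (fun t => ∃ k < r, (c+t)%L = Nat.floor ((L : ℝ) / (r : ℕ) * k))).card = K.card := by
    symm
    apply Finset.card_bij (fun k _ => k*L/r - c)
    · intro k hk
      rw [hmemK] at hk
      obtain ⟨hk2, hk3, hk4⟩ := hk
      simp only [Finset.mem_filter, Finset.mem_range]
      constructor
      · omega
      · have hct : c + (k*L/r - c) = k*L/r := by omega
        rw [hct]
        rcases Nat.lt_or_ge k r with hkr | hkr
        · exact ⟨k, hkr, by rw [floor_eq, Nat.mod_eq_of_lt (div_lt_L hL hr0 hkr)]⟩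
        · refine ⟨k - r, by omega, ?_⟩
          rw [floor_eq]
          have h2 : k * L / r = (k-r) * L / r + L := by
            rw [← div_add_L hr0]
            have hkk : (k - r) + r = k := by omega
            rw [hkk]
          rw [h2, Nat.add_mod_right, Nat.mod_eq_of_lt (div_lt_L hL hr0 (by omega))]
    · intro k₁ h₁ k₂ h₂ heq
      rw [hmemK] at h₁ h₂
      by_contra hne
      rcases Nat.lt_or_ge k₁ k₂ with h | h
      · have := div_strictmono hr0 (le_of_lt hr) h; omega
      · have hlt : k₂ < k₁ := by omega
        have := div_strictmono hr0 (le_of_lt hr) hlt; omega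
    · intro t ht
      simp only [Finset.mem_filter, Finset.mem_range] at ht
      obtain ⟨htℓ, k₀, hk₀, hfl⟩ := ht
      rw [floor_eq] at hfl
      rcases Nat.lt_or_ge (c + t) L with hct | hct
      · rw [Nat.mod_eq_of_lt hct] at hfl
        refine ⟨k₀, ?_, by omega⟩
        rw [hmemK]
        omega
      · have hmod : (c + t) % L = c + t - L := by
          have h2 : c + t < 2 * L := by omega
          rw [Nat.mod_eq_sub_mod hct, Nat.mod_eq_of_lt (by omega)]
        rw [hmod] at hfl
        refine ⟨k₀ + r, ?_, ?_⟩
        · rw [hmemK, div_add_L hr0]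
          omega
        · rw [div_add_L hr0]
          omega
  rw [hcard]
  -- now bound K.card
  set a := (c*r + L - 1)/L with ha
  set b := ((c+ℓ)*r - 1)/L + 1 with hb
  have hsub : K ⊆ Finset.Ico a b := by
    intro k hk
    rw [hmemK] at hk
    obtain ⟨hk2, hk3, hk4⟩ := hk
    rw [Nat.le_div_iff_mul_le hr0] at hk3
    rw [Nat.div_lt_iff_lt_mul hr0] at hk4
    rw [Finset.mem_Ico]
    constructor
    · -- a ≤ k
      rw [ha]
      refine (Nat.div_le_iff_le_mul_add_pred hL).mpr ?_
      have hck : c * r ≤ L * k := by rw [mul_comm L k]; exact hk3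
      omega
    · -- k < b
      rw [hb]
      have h1 : k * L ≤ (c+ℓ)*r - 1 := by omega
      have h2 : k ≤ ((c+ℓ)*r - 1)/L := (Nat.le_div_iff_mul_le hL).mpr h1
      omega
  have hKcard : K.card ≤ b - a := by
    have := Finset.card_le_card hsub
    rwa [Nat.card_Ico] at this
  rcases Nat.lt_or_ge b a with hba | hba
  · have : K.card = 0 := by omega
    rw [this]
    push_cast
    positivity
  · have h1 : (K.card : ℝ) ≤ (b : ℝ) - a := by
      have := Nat.cast_le (α := ℝ).mpr hKcard
      rw [Nat.cast_sub hba] at this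
      exact this
    have h2 : (b : ℝ) ≤ ((c+ℓ)*r - 1 : ℕ)/(L:ℝ) + 1 := by
      rw [hb]
      push_cast
      have := Nat.cast_div_le (α := ℝ) (m := (c+ℓ)*r - 1) (n := L)
      push_cast at this
      linarith
    have h3 : ((c:ℝ)*r)/(L:ℝ) ≤ (a:ℝ) := by
      rw [div_le_iff₀ (by positivity)]
      have h4 : c*r ≤ a*L := by
        have h6 : c*r + L - 1 < (a+1)*L := (Nat.div_lt_iff_lt_mul hL).mp (Nat.lt_succ_self _)
        zify [show (1:ℕ) ≤ c*r + L by omega] at h6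
        zify
        nlinarith [h6]
      calc (c:ℝ)*r = ((c*r : ℕ) : ℝ) := by push_cast; ring
        _ ≤ ((a*L : ℕ) : ℝ) := Nat.cast_le.mpr h4
        _ = (a:ℝ)*L := by push_cast; ring
    have h5 : (((c+ℓ)*r - 1 : ℕ) : ℝ) ≤ (c+ℓ)*r := by
      have : ((c+ℓ)*r - 1 : ℕ) ≤ (c+ℓ)*r := by omega
      calc (((c+ℓ)*r - 1 : ℕ) : ℝ) ≤ (((c+ℓ)*r : ℕ) : ℝ) := Nat.cast_le.mpr this
        _ = ((c:ℝ)+ℓ)*r := by push_cast; ring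
    have hLpos : (0:ℝ) < L := by positivity
    calc (K.card : ℝ) ≤ (b:ℝ) - a := h1
      _ ≤ (((c+ℓ)*r - 1 : ℕ):ℝ)/(L:ℝ) + 1 - ((c:ℝ)*r)/L := by linarith
      _ ≤ (((c:ℝ)+ℓ)*r)/(L:ℝ) + 1 - ((c:ℝ)*r)/L := by gcongr
      _ = (ℓ*r : ℝ)/L + 1 := by field_simp; ring

lemma shift_inj {L : ℕ} {c w₁ w₂ : ℕ} (h1 : w₁ < L) (h2 : w₂ < L)
    (h : (c+w₁)%L = (c+w₂)%L) : w₁ = w₂ := by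
  have h' : w₁ ≡ w₂ [MOD L] := Nat.ModEq.add_left_cancel' c h
  rwa [Nat.ModEq, Nat.mod_eq_of_lt h1, Nat.mod_eq_of_lt h2] at h'

open Classical in
lemma full_sum (L r : ℕ) (hL : 0 < L) (hr : r < L) :
    ∑ i ∈ range L, bb L r i = r := by
  rcases Nat.eq_zero_or_pos r with hr0 | hr0
  · subst hr0; simp [bb]
  have hsum : ∑ i ∈ range L, bb L r i
      = ((range L).filter (fun i => ∃ k < r, i = Nat.floor ((L : ℝ) / (r : ℕ) * k))).card := by
    rw [← Finset.sum_boole]; rfl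
  rw [hsum]
  have himg : (range L).filter (fun i => ∃ k < r, i = Nat.floor ((L : ℝ) / (r : ℕ) * k))
      = (range r).image (fun k => k * L / r) := by
    ext i
    simp only [Finset.mem_filter, Finset.mem_range, Finset.mem_image]
    constructor
    · rintro ⟨hiL, k, hk, hfl⟩
      exact ⟨k, hk, by rw [hfl, floor_eq]⟩
    · rintro ⟨k, hk, hfl⟩
      refine ⟨?_, k, hk, by rw [← hfl, floor_eq]⟩
      rw [← hfl]
      exact div_lt_L hL hr0 hk
  rw [himg, Finset.card_image_of_injOn, Finset.card_range]
  intro k₁ h₁ k₂ h₂ heq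
  have heq' : k₁ * L / r = k₂ * L / r := heq
  by_contra hne
  rcases Nat.lt_or_ge k₁ k₂ with h | h
  · have := div_strictmono hr0 (le_of_lt hr) h; omega
  · have hlt : k₂ < k₁ := by omega
    have := div_strictmono hr0 (le_of_lt hr) hlt; omega

lemma main_bound (L r : ℕ) (hL : 0 < L) (hr : r < L) :
    ∀ n : ℕ, ∀ T : Finset ℕ, T ⊆ range L → T.card ≤ n →
    ∑ i ∈ T, bb L r i ≤ (r:ℝ)/L * T.card + ((T.filter (fun i => (i+1)%L ∉ T)).card : ℝ) := by
  intro n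
  induction n with
  | zero =>
    intro T hTsub hTcard
    have : T = ∅ := Finset.card_eq_zero.mp (by omega)
    subst this
    simp
  | succ n ih =>
    intro T hTsub hTcard
    rcases Finset.eq_empty_or_nonempty T with hTe | ⟨i₀, hi₀⟩
    · subst hTe; simp
    by_cases hfull : range L ⊆ T
    · -- T = range L
      have hTeq : T = range L := Finset.Subset.antisymm hTsub hfull
      subst hTeq
      rw [full_sum L r hL hr]
      have hfilt : (range L).filter (fun i => (i+1)%L ∉ range L) = ∅ := by
        apply Finset.filter_eq_empty_iff.mpr
        intro i _
        simp only [Finset.mem_range, not_not, Decidable.not_not]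
        exact Nat.mod_lt _ hL
      rw [hfilt]
      have : (r:ℝ)/L * (range L).card = r := by
        rw [Finset.card_range]
        field_simp
      rw [this]
      simp
    · -- proper nonempty subset
      obtain ⟨m, hmL, hmT⟩ : ∃ m, m ∈ range L ∧ m ∉ T := by
        rcases Finset.not_subset.mp hfull with ⟨m, h1, h2⟩
        exact ⟨m, h1, h2⟩
      rw [Finset.mem_range] at hmL
      have hi₀L : i₀ < L := Finset.mem_range.mp (hTsub hi₀)
      -- forward walk 1 : find left endpoint c
      have hPex : ∃ v, (m + v) % L ∈ T := by
        refine ⟨L + i₀ - m, ?_⟩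
        have h1 : m + (L + i₀ - m) = L + i₀ := by omega
        rw [h1, Nat.add_mod_left, Nat.mod_eq_of_lt hi₀L]
        exact hi₀
      set v := Nat.find hPex with hv
      have hvT : (m + v) % L ∈ T := Nat.find_spec hPex
      have hv1 : 1 ≤ v := by
        rcases Nat.eq_zero_or_pos v with h0 | h0
        · exfalso
          have := hvT
          rw [h0] at this
          rw [Nat.add_zero, Nat.mod_eq_of_lt hmL] at this
          exact hmT this
        · exact h0
      set c := (m + v) % L with hc
      have hcT : c ∈ T := hvT
      have hcL : c < L := Nat.mod_lt _ hL
      have hpredc : (c + (L-1)) % L ∉ T := by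
        have h1 : (c + (L-1)) % L = (m + (v-1)) % L := by
          rw [hc, Nat.mod_add_mod]
          have h2 : m + v + (L-1) = m + (v-1) + L := by omega
          rw [h2, Nat.add_mod_right]
        rw [h1]
        exact Nat.find_min hPex (by omega)
      -- forward walk 2 : find length of arc starting at c
      have hQex : ∃ w, (c + w) % L ∉ T := by
        rcases le_or_gt c m with hcm | hcm
        · refine ⟨m - c, ?_⟩
          have h1 : c + (m - c) = m := by omega
          rw [h1, Nat.mod_eq_of_lt hmL]
          exact hmT
        · refine ⟨L + m - c, ?_⟩
          have h1 : c + (L + m - c) = L + m := by omega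
          rw [h1, Nat.add_mod_left, Nat.mod_eq_of_lt hmL]
          exact hmT
      set w := Nat.find hQex with hw
      have hwspec : (c + w) % L ∉ T := Nat.find_spec hQex
      have hwin : ∀ u, u < w → (c + u) % L ∈ T := by
        intro u hu
        have := Nat.find_min hQex hu
        simpa using this
      have hw1 : 1 ≤ w := by
        rcases Nat.eq_zero_or_pos w with h0 | h0
        · exfalso
          have := hwspec
          rw [h0, Nat.add_zero, Nat.mod_eq_of_lt hcL] at this
          exact this hcT
        · exact h0
      have hwL : w ≤ L := by
        rcases le_or_gt c m with hcm | hcm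
        · have h2 : (c + (m - c)) % L ∉ T := by
            have h1 : c + (m - c) = m := by omega
            rw [h1, Nat.mod_eq_of_lt hmL]; exact hmT
          have : w ≤ _ := Nat.find_le h2
          omega
        · have h2 : (c + (L + m - c)) % L ∉ T := by
            have h1 : c + (L + m - c) = L + m := by omega
            rw [h1, Nat.add_mod_left, Nat.mod_eq_of_lt hmL]; exact hmT
          have : w ≤ _ := Nat.find_le h2
          omega
      -- the arc A
      set A := (range w).image (fun u => (c + u) % L) with hA
      have hinjA : Set.InjOn (fun u => (c + u) % L) ↑(range w) := by
        intro u₁ h₁ u₂ h₂ heq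
        simp only [Finset.coe_range, Set.mem_Iio] at h₁ h₂
        exact shift_inj (by omega) (by omega) heq
      have hAsubT : A ⊆ T := by
        intro i hi
        rw [hA] at hi
        obtain ⟨u, hu, hui⟩ := Finset.mem_image.mp hi
        rw [← hui]
        exact hwin u (Finset.mem_range.mp hu)
      have hAcard : A.card = w := by
        rw [hA, Finset.card_image_of_injOn hinjA, Finset.card_range]
      have hsumA : ∑ i ∈ A, bb L r i ≤ (w * r : ℝ)/L + 1 := by
        rw [hA, Finset.sum_image (fun x hx y hy h => hinjA hx hy h)]
        exact arc_bound L r hL hr c w hcL hwL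
      -- right endpoint e
      set e := (c + (w-1)) % L with he
      have heA : e ∈ A := by
        rw [hA]
        exact Finset.mem_image.mpr ⟨w-1, Finset.mem_range.mpr (by omega), rfl⟩
      have heT : e ∈ T := hAsubT heA
      have hesucc : (e + 1) % L ∉ T := by
        have h1 : (e + 1) % L = (c + w) % L := by
          rw [he, Nat.mod_add_mod]
          congr 1
          omega
        rw [h1]
        exact hwspec
      -- T' = T \ A
      set T' := T \ A with hT'
      have hT'sub : T' ⊆ range L := fun i hi => hTsub (Finset.mem_sdiff.mp hi).1
      have hwcard : w ≤ T.card := hAcard ▸ Finset.card_le_card hAsubT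
      have hT'card : T'.card = T.card - w := by
        rw [hT', Finset.card_sdiff_of_subset hAsubT, hAcard]
      have hsplit : ∑ i ∈ T', bb L r i + ∑ i ∈ A, bb L r i = ∑ i ∈ T, bb L r i :=
        Finset.sum_sdiff hAsubT
      -- endpoint sets
      set E := T.filter (fun i => (i+1)%L ∉ T) with hE
      set E' := T'.filter (fun i => (i+1)%L ∉ T') with hE'
      have heE : e ∈ E := Finset.mem_filter.mpr ⟨heT, hesucc⟩
      have heA' : e ∉ T' := fun h => (Finset.mem_sdiff.mp h).2 heA
      have hE'sub : E' ⊆ E.erase e := by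
        intro i hi
        rw [hE', Finset.mem_filter] at hi
        obtain ⟨hiT', hisucc⟩ := hi
        have hiT : i ∈ T := (Finset.mem_sdiff.mp hiT').1
        have hiL : i < L := Finset.mem_range.mp (hTsub hiT)
        refine Finset.mem_erase.mpr ⟨fun hie => heA' (hie ▸ hiT'), Finset.mem_filter.mpr ⟨hiT, ?_⟩⟩
        intro hsT
        -- (i+1)%L ∈ T but ∉ T', so ∈ A
        have hsA : (i+1)%L ∈ A := by
          by_contra hsA
          exact hisucc (Finset.mem_sdiff.mpr ⟨hsT, hsA⟩)
        rw [hA] at hsA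
        obtain ⟨u, hu, hui⟩ := Finset.mem_image.mp hsA
        rw [Finset.mem_range] at hu
        have hieq : i = (c + u + (L-1)) % L := by
          have h1 : ((i+1) % L + (L-1)) % L = i := by
            rw [Nat.mod_add_mod]
            have h2 : i + 1 + (L-1) = i + L := by omega
            rw [h2, Nat.add_mod_right, Nat.mod_eq_of_lt hiL]
          rw [← h1, ← hui, Nat.mod_add_mod]
        rcases Nat.eq_zero_or_pos u with hu0 | hu0
        · -- i = pred c ∉ T
          rw [hu0] at hieq
          simp only [Nat.add_zero] at hieq
          exact hpredc (hieq ▸ hiT)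
        · -- i ∈ A, contradiction with i ∈ T'
          have h3 : i = (c + (u-1)) % L := by
            rw [hieq]
            have h4 : c + u + (L-1) = c + (u-1) + L := by omega
            rw [h4, Nat.add_mod_right]
          have hiA : i ∈ A := by
            rw [hA]
            exact Finset.mem_image.mpr ⟨u-1, Finset.mem_range.mpr (by omega), h3.symm⟩
          exact (Finset.mem_sdiff.mp hiT').2 hiA
      have hE1 : 1 ≤ E.card := Finset.card_pos.mpr ⟨e, heE⟩
      have hE'card : E'.card ≤ E.card - 1 := by
        have h1 := Finset.card_le_card hE'sub
        rwa [Finset.card_erase_of_mem heE] at h1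
      -- apply IH
      have hIH := ih T' hT'sub (by omega)
      rw [← hE'] at hIH
      -- assemble
      have hc1 : ((T'.card : ℕ) : ℝ) = (T.card : ℝ) - w := by
        rw [hT'card, Nat.cast_sub hwcard]
      have hc2 : ((E'.card : ℕ) : ℝ) ≤ (E.card : ℝ) - 1 := by
        have := Nat.cast_le (α := ℝ).mpr hE'card
        rwa [Nat.cast_sub hE1, Nat.cast_one] at this
      have hrL : (0:ℝ) ≤ (r:ℝ)/L := by positivity
      rw [← hsplit]
      have hexp : (r:ℝ)/L * T'.card = (r:ℝ)/L * T.card - (r:ℝ)/L * w := by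
        rw [hc1]; ring
      have harc : (w * r : ℝ)/L = (r:ℝ)/L * w := by
        field_simp
      calc ∑ i ∈ T', bb L r i + ∑ i ∈ A, bb L r i
          ≤ ((r:ℝ)/L * T'.card + E'.card) + ((w * r : ℝ)/L + 1) := by
            exact add_le_add hIH hsumA
        _ ≤ (r:ℝ)/L * T.card + E.card := by
            linarith [hexp, harc, hc2, hIH, hsumA]


/-- The `X`-count at shift `s`: `⟨C, α^{↺s}⟩^X = Σ_{i < L} x i * α ((i - s) mod L)`. -/
noncomputable def xcount (L : ℕ) (x α : ℕ → ℝ) (s : ℕ) : ℝ :=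
  ∑ i ∈ Finset.range L, x i * α ((i + (L - s % L)) % L)

open Classical in
/-- Pseudo-periodic assignment of total weight `N` on a cycle of length `L`. -/
noncomputable def atilde (L N : ℕ) (i : ℕ) : ℝ :=
  if ∃ k < N % L, i = Nat.floor ((L : ℝ) / (N % L : ℕ) * k)
  then ((N / L : ℕ) : ℝ) + 1 else ((N / L : ℕ) : ℝ)

theorem pseudo_periodic_count_bound_segments (L N p : ℕ) (hL : 0 < L) (hN : 0 < N)
    (x : ℕ → ℝ) (hx : ∀ i, x i = 0 ∨ x i = 1)
    (start len : ℕ → ℕ)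
    (hsupp : ∀ i < L,
      (x i = 1 ↔ ∃ j < p, ∃ t < len j, i = (start j + t) % L)) :
    (⨆ s : ℕ, xcount L x (atilde L N) s)
      ≤ (N : ℝ) / L * (∑ i ∈ Finset.range L, x i) + p := by
  classical
  set r := N % L with hrdef
  set q := N / L with hqdef
  have hr : r < L := Nat.mod_lt N hL
  have hat : ∀ i, atilde L N i = (q:ℝ) + bb L r i := by
    intro i
    by_cases h : ∃ k < N % L, i = Nat.floor ((L : ℝ) / (N % L : ℕ) * k)
    · simp [atilde, bb, h, hrdef, hqdef]
    · simp [atilde, bb, h, hrdef, hqdef]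
  apply ciSup_le
  intro s
  set d := L - s % L with hd
  set T := (range L).filter (fun i => x i = 1) with hT
  have hxmem : ∀ i ∈ range L, i ∈ T ↔ x i = 1 := by
    intro i hi; simp [hT, Finset.mem_filter, hi]
  have hxsum : ∑ i ∈ range L, x i = (T.card : ℝ) := by
    rw [hT, ← Finset.sum_boole]
    apply Finset.sum_congr rfl
    intro i _
    rcases hx i with h | h <;> simp [h]
  have hSpos : (0:ℝ) ≤ (T.card : ℝ) := by positivity
  -- expand xcount
  have hxc : xcount L x (atilde L N) s
      = (q:ℝ) * T.card + ∑ i ∈ T, bb L r ((i + d) % L) := by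
    unfold xcount
    have h1 : ∀ i ∈ range L, x i * atilde L N ((i + d) % L)
        = (q:ℝ) * x i + x i * bb L r ((i + d) % L) := by
      intro i _
      rw [hat]
      ring
    rw [Finset.sum_congr rfl h1, Finset.sum_add_distrib, ← Finset.mul_sum, hxsum]
    congr 1
    rw [hT, Finset.sum_filter]
    apply Finset.sum_congr rfl
    intro i _
    rcases hx i with h | h <;> simp [h]
  -- shifted set
  have hshiftinj : ∀ i₁ ∈ range L, ∀ i₂ ∈ range L,
      (i₁ + d) % L = (i₂ + d) % L → i₁ = i₂ := by
    intro i₁ h₁ i₂ h₂ heq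
    rw [Finset.mem_range] at h₁ h₂
    rw [add_comm i₁ d, add_comm i₂ d] at heq
    exact shift_inj h₁ h₂ heq
  set Td := T.image (fun i => (i + d) % L) with hTd
  have hTsubR : T ⊆ range L := Finset.filter_subset _ _
  have hTdsub : Td ⊆ range L := by
    intro j hj
    rw [hTd] at hj
    obtain ⟨i, _, hij⟩ := Finset.mem_image.mp hj
    rw [Finset.mem_range, ← hij]
    exact Nat.mod_lt _ hL
  have hTdcard : Td.card = T.card :=
    Finset.card_image_of_injOn (fun a ha b hb => hshiftinj a (hTsubR ha) b (hTsubR hb))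
  have hTdsum : ∑ i ∈ T, bb L r ((i + d) % L) = ∑ j ∈ Td, bb L r j := by
    rw [hTd, Finset.sum_image (fun a ha b hb => hshiftinj a (hTsubR ha) b (hTsubR hb))]
  -- main bound
  have hmain := main_bound L r hL hr Td.card Td hTdsub le_rfl
  -- endpoint set equality
  have hsucc_comm : ∀ i, ((i + d) % L + 1) % L = ((i + 1) % L + d) % L := by
    intro i
    rw [Nat.mod_add_mod, Nat.mod_add_mod]
    congr 1
    ring
  have hEeq : Td.filter (fun j => (j + 1) % L ∉ Td)
      = (T.filter (fun i => (i + 1) % L ∉ T)).image (fun i => (i + d) % L) := by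
    ext j
    simp only [Finset.mem_filter, Finset.mem_image]
    constructor
    · rintro ⟨hjTd, hjs⟩
      rw [hTd] at hjTd
      obtain ⟨i, hiT, hij⟩ := Finset.mem_image.mp hjTd
      refine ⟨i, ⟨hiT, ?_⟩, hij⟩
      intro hsT
      apply hjs
      rw [hTd]
      refine Finset.mem_image.mpr ⟨(i + 1) % L, hsT, ?_⟩
      rw [← hsucc_comm, hij]
    · rintro ⟨i, ⟨hiT, hsT⟩, hij⟩
      constructor
      · rw [hTd]; exact Finset.mem_image.mpr ⟨i, hiT, hij⟩
      · intro hjs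
        apply hsT
        rw [hTd] at hjs
        obtain ⟨i', hi'T, hi'j⟩ := Finset.mem_image.mp hjs
        have : (i' + d) % L = ((i + 1) % L + d) % L := by
          rw [hi'j, ← hij, hsucc_comm]
        have hi'eq : i' = (i + 1) % L :=
          hshiftinj i' (hTsubR hi'T) ((i+1)%L) (Finset.mem_range.mpr (Nat.mod_lt _ hL)) this
        rwa [← hi'eq]
  have hEcard : (Td.filter (fun j => (j + 1) % L ∉ Td)).card
      = (T.filter (fun i => (i + 1) % L ∉ T)).card := by
    rw [hEeq]
    exact Finset.card_image_of_injOn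
      (fun a ha b hb => hshiftinj a (hTsubR (Finset.filter_subset _ _ ha))
        b (hTsubR (Finset.filter_subset _ _ hb)))
  -- endpoints of T at most p
  have hEp : (T.filter (fun i => (i + 1) % L ∉ T)).card ≤ p := by
    have hsub : T.filter (fun i => (i + 1) % L ∉ T)
        ⊆ (range p).image (fun j => (start j + (len j - 1)) % L) := by
      intro i hi
      rw [Finset.mem_filter] at hi
      obtain ⟨hiT, hisucc⟩ := hi
      have hiL : i < L := Finset.mem_range.mp (hTsubR hiT)
      have hxi : x i = 1 := by rw [← hxmem i (Finset.mem_range.mpr hiL)]; exact hiT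
      obtain ⟨j, hj, t, ht, hit⟩ := (hsupp i hiL).mp hxi
      have htlen : t + 1 = len j := by
        by_contra hne
        have ht1 : t + 1 < len j := by omega
        have hi' : x ((start j + (t+1)) % L) = 1 := by
          rw [hsupp _ (Nat.mod_lt _ hL)]
          exact ⟨j, hj, t+1, ht1, rfl⟩
        have hi's : (i + 1) % L = (start j + (t+1)) % L := by
          rw [hit, Nat.mod_add_mod, Nat.add_assoc]
        apply hisucc
        rw [hi's]
        rw [hxmem _ (Finset.mem_range.mpr (Nat.mod_lt _ hL))]
        exact hi'
      refine Finset.mem_image.mpr ⟨j, Finset.mem_range.mpr hj, ?_⟩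
      rw [hit]
      congr 2
      omega
    calc (T.filter (fun i => (i + 1) % L ∉ T)).card
        ≤ ((range p).image (fun j => (start j + (len j - 1)) % L)).card :=
          Finset.card_le_card hsub
      _ ≤ (range p).card := Finset.card_image_le
      _ = p := Finset.card_range p
  -- assemble
  have hNLr : (N:ℝ)/L = (q:ℝ) + (r:ℝ)/L := by
    have h1 : (L:ℕ) * q + r = N := Nat.div_add_mod N L
    have h2 : (L:ℝ) * q + r = N := by exact_mod_cast h1
    field_simp
    linarith
  rw [hxc, hTdsum, hxsum, hNLr]
  have hp' : ((Td.filter (fun j => (j + 1) % L ∉ Td)).card : ℝ) ≤ p := by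
    rw [hEcard]
    exact_mod_cast hEp
  rw [hTdcard] at hmain
  nlinarith [hmain, hp', hSpos]
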